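/- Let I be a finite nonempty index set and let d : I → [0,∞). Let λ > 0, β > 0, T_f > 0, K ≥ 0 be constants, let α : [0,∞) → [0,∞) be a strictly monotone increasing bijection with inverse α⁻¹, and let ᾱ : [0,∞) → [0,∞) be monotone nondecreasing. For each i ∈ I let g_i : ℝ → ℝ be continuous with g_i ≥ 0, and suppose: (i) for all t ≥ T_f, ∫_{t−T_f}^{t} g_i(s) ds ≥ α(d(i)); and (ii) for all s ≥ 0, g_i(s) ≤ K·e^{−β s} + ᾱ(d(i)). Define μ_i(t) = ∫_{0}^{t} e^{−λ(t−s)}·g_i(s) ds, and for each t let σ(t) ∈ I be any index minimising i ↦ μ_i(t) over I. Then for every η > 0 there exists T★ > 0 such that for all t ≥ T★, d(σ(t)) ≤ α⁻¹( 2·e^{λ T_f}·ᾱ( min_{i∈I} d(i) ) / λ ) + η. -/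

import Mathlib

set_option maxHeartbeats 1000000

/-- Fixed-bank version of Theorem 1 (parameter estimation part) of the supervisory observer:
under persistency-of-excitation lower bounds and transient-plus-mismatch upper bounds on the
squared output errors, the sample selected by minimising the monitoring signal is eventually
as good as the best sample in the bank, up to a class-K∞ margin. -/
theorem stmt11 {I : Type*} [Fintype I] [Nonempty I]
    (d : I → ℝ) (hd : ∀ i, 0 ≤ d i)
    (lam β Tf K : ℝ) (hlam : 0 < lam) (hβ : 0 < β) (hTf : 0 < Tf) (hK : 0 ≤ K)
    (α αinv : ℝ → ℝ)
    (hα : StrictMonoOn α (Set.Ici 0))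
    (hbij : Set.BijOn α (Set.Ici 0) (Set.Ici 0))
    (hinv : Set.InvOn αinv α (Set.Ici 0) (Set.Ici 0))
    (αbar : ℝ → ℝ) (hαbar : MonotoneOn αbar (Set.Ici 0))
    (hαbarnn : ∀ r ≥ (0:ℝ), 0 ≤ αbar r)
    (g : I → ℝ → ℝ) (hgcont : ∀ i, Continuous (g i)) (hgnn : ∀ i s, 0 ≤ g i s)
    (hPE : ∀ i, ∀ t ≥ Tf, α (d i) ≤ ∫ s in (t - Tf)..t, g i s)
    (hub : ∀ i, ∀ s ≥ (0:ℝ), g i s ≤ K * Real.exp (-β * s) + αbar (d i))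
    (μ : I → ℝ → ℝ)
    (hμ : ∀ i t, μ i t = ∫ s in (0:ℝ)..t, Real.exp (-lam * (t - s)) * g i s)
    (σ : ℝ → I) (hσ : ∀ t i, μ (σ t) t ≤ μ i t) :
    ∀ η > 0, ∃ Tstar > 0, ∀ t ≥ Tstar,
      d (σ t) ≤
        αinv (2 * Real.exp (lam * Tf) *
          αbar (Finset.univ.inf' Finset.univ_nonempty d) / lam) + η := by
  intro η hη
  -- best sample
  obtain ⟨i₀, -, hi₀⟩ := Finset.exists_mem_eq_inf' (Finset.univ_nonempty) d
  set dmin : ℝ := Finset.univ.inf' Finset.univ_nonempty d with hdmin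
  have hdmin0 : 0 ≤ dmin := hi₀ ▸ hd i₀
  set A : ℝ := αbar dmin with hA
  have hA0 : 0 ≤ A := hαbarnn _ hdmin0
  set c : ℝ := 2 * Real.exp (lam * Tf) * A / lam with hc
  have hc0 : 0 ≤ c := by positivity
  -- ζ = αinv c, with α ζ = c
  obtain ⟨ζ, hζmem, hζ⟩ := hbij.surjOn (Set.mem_Ici.mpr hc0)
  have hζval : αinv c = ζ := by rw [← hζ]; exact hinv.1 hζmem
  have hζ0 : 0 ≤ ζ := hζmem
  -- margin
  set ε : ℝ := α (ζ + η) - c with hε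
  have hε0 : 0 < ε := by
    have := hα hζmem (by simp only [Set.mem_Ici]; linarith) (by linarith : ζ < ζ + η)
    rw [hζ] at this; linarith
  -- decay rate
  set γ : ℝ := min β lam / 2 with hγ
  have hγ0 : 0 < γ := by positivity
  have hγβ : γ ≤ β := by
    have := min_le_left β lam; simp only [hγ]; linarith
  have hγlam : γ ≤ lam := by
    have := min_le_right β lam; simp only [hγ]; linarith
  -- transient tendsto 0
  have htend : Filter.Tendsto
      (fun t : ℝ => K * Real.exp (lam * Tf) * (t ^ (1:ℝ) * Real.exp (-γ * t)))
      Filter.atTop (nhds 0) := by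
    have := (tendsto_rpow_mul_exp_neg_mul_atTop_nhds_zero 1 γ hγ0).const_mul
      (K * Real.exp (lam * Tf))
    simpa using this
  have hev := htend.eventually_lt_const hε0
  obtain ⟨T₀, hT₀⟩ := Filter.eventually_atTop.mp hev
  refine ⟨max Tf (max T₀ 1), lt_max_iff.mpr (Or.inl hTf), ?_⟩
  intro t ht
  have htTf : Tf ≤ t := le_trans (le_max_left _ _) ht
  have ht0 : 0 ≤ t := le_trans hTf.le htTf
  have htT₀ : T₀ ≤ t := le_trans ((le_max_left _ _).trans (le_max_right _ _)) ht
  -- integrability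
  have hce : Continuous fun s : ℝ => Real.exp (-lam * (t - s)) := by fun_prop
  have hint : ∀ (i : I) (a b : ℝ), IntervalIntegrable
      (fun s => Real.exp (-lam * (t - s)) * g i s) MeasureTheory.volume a b := by
    intro i a b
    exact (hce.mul (hgcont i)).intervalIntegrable a b
  -- Lower bound: exp(-lam*Tf) * α (d i) ≤ μ i t for all i
  have hlow : ∀ i, Real.exp (-(lam * Tf)) * α (d i) ≤ μ i t := by
    intro i
    rw [hμ]
    have hsplit : (∫ s in (0:ℝ)..t, Real.exp (-lam * (t - s)) * g i s)
        = (∫ s in (0:ℝ)..(t - Tf), Real.exp (-lam * (t - s)) * g i s)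
          + ∫ s in (t - Tf)..t, Real.exp (-lam * (t - s)) * g i s :=
      (intervalIntegral.integral_add_adjacent_intervals (hint i 0 (t - Tf)) (hint i (t - Tf) t)).symm
    have h1 : 0 ≤ ∫ s in (0:ℝ)..(t - Tf), Real.exp (-lam * (t - s)) * g i s :=
      intervalIntegral.integral_nonneg (by linarith) (fun u _ => mul_nonneg (Real.exp_pos _).le (hgnn i u))
    have h2 : (∫ s in (t - Tf)..t, Real.exp (-(lam * Tf)) * g i s)
        ≤ ∫ s in (t - Tf)..t, Real.exp (-lam * (t - s)) * g i s := by
      apply intervalIntegral.integral_mono_on (by linarith)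
        ((continuous_const.mul (hgcont i)).intervalIntegrable _ _)
        (hint i _ _)
      intro s hs
      apply mul_le_mul_of_nonneg_right _ (hgnn i s)
      apply Real.exp_le_exp.mpr
      have h3 : t - s ≤ Tf := by linarith [hs.1]
      nlinarith [mul_le_mul_of_nonneg_left h3 hlam.le]
    have h4 : (∫ s in (t - Tf)..t, Real.exp (-(lam * Tf)) * g i s)
        = Real.exp (-(lam * Tf)) * ∫ s in (t - Tf)..t, g i s := by
      rw [intervalIntegral.integral_const_mul]
    have h5 := hPE i t htTf
    have h6 : Real.exp (-(lam * Tf)) * α (d i)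
        ≤ Real.exp (-(lam * Tf)) * ∫ s in (t - Tf)..t, g i s :=
      mul_le_mul_of_nonneg_left h5 (Real.exp_pos _).le
    rw [hsplit]; rw [h4] at h2; linarith
  -- Upper bound for the best sample
  have hup : μ i₀ t ≤ A / lam + K * (t * Real.exp (-γ * t)) := by
    rw [hμ]
    have hptw : (∫ s in (0:ℝ)..t, Real.exp (-lam * (t - s)) * g i₀ s)
        ≤ ∫ s in (0:ℝ)..t, (K * Real.exp (-γ * t) + A * Real.exp (-lam * (t - s))) := by
      apply intervalIntegral.integral_mono_on ht0 (hint i₀ _ _)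
      · exact ((continuous_const.add (continuous_const.mul hce)).intervalIntegrable _ _)
      intro s hs
      have hs0 : 0 ≤ s := hs.1
      have hst : s ≤ t := hs.2
      have h1 : g i₀ s ≤ K * Real.exp (-β * s) + A := by
        rw [hA, hi₀]; exact hub i₀ s hs0
      have hE : 0 < Real.exp (-lam * (t - s)) := Real.exp_pos _
      calc Real.exp (-lam * (t - s)) * g i₀ s
          ≤ Real.exp (-lam * (t - s)) * (K * Real.exp (-β * s) + A) :=
            mul_le_mul_of_nonneg_left h1 hE.le
        _ = K * (Real.exp (-lam * (t - s)) * Real.exp (-β * s))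
            + A * Real.exp (-lam * (t - s)) := by ring
        _ ≤ K * Real.exp (-γ * t) + A * Real.exp (-lam * (t - s)) := by
            apply add_le_add_left
            apply mul_le_mul_of_nonneg_left _ hK
            rw [← Real.exp_add, Real.exp_le_exp]
            nlinarith
    have hsum : (∫ s in (0:ℝ)..t, (K * Real.exp (-γ * t) + A * Real.exp (-lam * (t - s))))
        = K * Real.exp (-γ * t) * t + A * ∫ s in (0:ℝ)..t, Real.exp (-lam * (t - s)) := by
      rw [intervalIntegral.integral_add (intervalIntegrable_const)
        (show IntervalIntegrable (fun s => A * Real.exp (-lam * (t - s))) MeasureTheory.volume 0 t from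
          (continuous_const.mul hce).intervalIntegrable _ _),
        intervalIntegral.integral_const, intervalIntegral.integral_const_mul]
      simp [mul_comm]
    have hF : ∀ x ∈ Set.uIcc (0:ℝ) t, HasDerivAt
        (fun s : ℝ => Real.exp (-lam * (t - s)) / lam) (Real.exp (-lam * (t - x))) x := by
      intro x _
      have h1 : HasDerivAt (fun s : ℝ => -lam * (t - s)) lam x := by
        have := ((hasDerivAt_id x).const_sub t).const_mul (-lam)
        simpa using this
      have h3 := h1.exp.div_const lam
      rwa [mul_div_cancel_right₀ _ hlam.ne'] at h3
    have hcomp : (∫ s in (0:ℝ)..t, Real.exp (-lam * (t - s)))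
        = (1 - Real.exp (-lam * t)) / lam := by
      rw [intervalIntegral.integral_eq_sub_of_hasDerivAt hF (hce.intervalIntegrable _ _)]
      rw [sub_self, sub_zero, mul_zero, Real.exp_zero]
      ring
    have h8 : A * ((1 - Real.exp (-lam * t)) / lam) ≤ A / lam := by
      rw [← mul_div_assoc]
      gcongr
      nlinarith [Real.exp_pos (-lam * t), hA0]
    calc (∫ s in (0:ℝ)..t, Real.exp (-lam * (t - s)) * g i₀ s)
        ≤ K * Real.exp (-γ * t) * t + A * ((1 - Real.exp (-lam * t)) / lam) := by
          rw [← hcomp]; rw [hsum] at hptw; exact hptw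
      _ ≤ A / lam + K * (t * Real.exp (-γ * t)) := by
          have := h8
          nlinarith [Real.exp_pos (-γ * t)]
  -- combine
  have hchain : α (d (σ t)) ≤ α (ζ + η) := by
    have h1 := hlow (σ t)
    have h2 := (hσ t i₀).trans hup
    have hEp : (0:ℝ) < Real.exp (-(lam * Tf)) := Real.exp_pos _
    have h3 : α (d (σ t)) ≤ Real.exp (lam * Tf) * (A / lam + K * (t * Real.exp (-γ * t))) := by
      have h4 : Real.exp (-(lam * Tf)) * α (d (σ t)) ≤ A / lam + K * (t * Real.exp (-γ * t)) :=
        le_trans h1 h2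
      have h5 := mul_le_mul_of_nonneg_left h4 (Real.exp_pos (lam * Tf)).le
      rw [← mul_assoc, ← Real.exp_add] at h5
      simpa using h5
    have h6 : K * Real.exp (lam * Tf) * (t ^ (1:ℝ) * Real.exp (-γ * t)) < ε := hT₀ t htT₀
    rw [Real.rpow_one] at h6
    have h7 : Real.exp (lam * Tf) * (A / lam) ≤ c := by
      rw [hc, ← mul_div_assoc]
      gcongr
      nlinarith [Real.exp_pos (lam * Tf)]
    have : α (d (σ t)) ≤ c + ε := by nlinarith
    rw [hε] at this; linarith
  have hmem1 : d (σ t) ∈ Set.Ici (0:ℝ) := hd _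
  have hmem2 : ζ + η ∈ Set.Ici (0:ℝ) := by simp only [Set.mem_Ici]; linarith
  have := (hα.le_iff_le hmem1 hmem2).mp hchain
  rw [hζval]; linarith
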